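/- Fix α > 0, λ > 0, n ≥ 1, d ≥ 1. Let H(u, v) = (α/2)‖u‖² + uᵀ(Bv − c) − (α/2)‖v‖² on ℝ^d × ℝ^d with B and c as in the hard-instance construction, let U_1, …, U_n ∈ ℝ^{d×nd} be the blocks of a partition of the identity matrix of order nd (so the identity is [U_1ᵀ, …, U_nᵀ]), and define f_i(x, y) = λ·H(U_i x, U_i y) on ℝ^{nd} × ℝ^{nd} and f = (1/n)∑_{i=1}^n f_i. Then the family {f_i}_{i=1}^n is λ·√((8 + 2α²)/n)-average smooth, and f is (λα/n, λα/n)-convex-concave. -/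

import Mathlib

open Finset

lemma esp_norm_sq {ι : Type*} [Fintype ι] (z : EuclideanSpace ℝ ι) :
    ‖z‖ ^ 2 = ∑ p, (z p) ^ 2 := by
  rw [EuclideanSpace.real_norm_sq_eq]

lemma hasGradientAt_quad {ι : Type*} [Fintype ι] [DecidableEq ι]
    (κ w : ι → ℝ) (C : ℝ) (x : EuclideanSpace ℝ ι) :
    HasGradientAt (fun z : EuclideanSpace ℝ ι => (∑ p, (κ p * (z p * z p) + z p * w p)) + C)
      ((WithLp.toLp 2 (fun p => 2 * κ p * x p + w p) : EuclideanSpace ℝ ι)) x := by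
  rw [hasGradientAt_iff_hasFDerivAt]
  have h1 := HasFDerivAt.add_const C (HasFDerivAt.fun_sum (fun p (_ : p ∈ Finset.univ) =>
    HasFDerivAt.add
      ((((EuclideanSpace.proj (𝕜 := ℝ) p).hasFDerivAt (x := x)).mul
        ((EuclideanSpace.proj (𝕜 := ℝ) p).hasFDerivAt (x := x))).const_mul (κ p))
      (((EuclideanSpace.proj (𝕜 := ℝ) p).hasFDerivAt (x := x)).mul_const (w p))))
  refine h1.congr_fderiv ?_
  ext h
  simp [PiLp.inner_apply, RCLike.inner_apply, EuclideanSpace.proj]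
  apply Finset.sum_congr rfl
  intro p _
  ring

lemma sum_pred_le (d : ℕ) (b : ℕ → ℝ) :
    ∑ k ∈ Finset.range d, (if 0 < k then b (k - 1) else 0) ^ 2
      ≤ ∑ k ∈ Finset.range d, (b k) ^ 2 := by
  cases d with
  | zero => simp
  | succ m =>
    rw [Finset.sum_range_succ' (fun k => (if 0 < k then b (k - 1) else 0) ^ 2) m]
    rw [Finset.sum_range_succ (fun k => (b k) ^ 2) m]
    have h1 : ∀ k ∈ Finset.range m,
        (if 0 < k + 1 then b (k + 1 - 1) else 0) ^ 2 = b k ^ 2 := by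
      intro k _; simp
    rw [Finset.sum_congr rfl h1]
    simp only [lt_irrefl, if_false, ite_self]
    nlinarith [sq_nonneg (b m)]

lemma sum_succ_le (d : ℕ) (b : ℕ → ℝ) :
    ∑ k ∈ Finset.range d, (if k + 1 < d then b (k + 1) else 0) ^ 2
      ≤ ∑ k ∈ Finset.range d, (b k) ^ 2 := by
  cases d with
  | zero => simp
  | succ m =>
    rw [Finset.sum_range_succ (fun k => (if k + 1 < m + 1 then b (k + 1) else 0) ^ 2) m]
    rw [Finset.sum_range_succ' (fun k => (b k) ^ 2) m]
    have h1 : ∀ k ∈ Finset.range m, (if k + 1 < m + 1 then b (k + 1) else 0) ^ 2 = b (k+1) ^ 2 := by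
      intro k hk
      rw [if_pos (by simpa using Finset.mem_range.mp hk)]
    rw [Finset.sum_congr rfl h1]
    have : (if m + 1 < m + 1 then b (m + 1) else 0) = 0 := by simp
    rw [this]
    nlinarith [sq_nonneg (b 0)]

/-- sum of (predecessor shift)^2 over Fin d -/
lemma fin_sum_pred_le {d : ℕ} (b : Fin d → ℝ) :
    ∑ j : Fin d, (if h : 0 < (j : ℕ) then
        b ⟨(j : ℕ) - 1, Nat.lt_of_le_of_lt (Nat.sub_le _ _) j.isLt⟩ else 0) ^ 2
      ≤ ∑ j : Fin d, (b j) ^ 2 := by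
  set b' : ℕ → ℝ := fun k => if h : k < d then b ⟨k, h⟩ else 0 with hb'
  have e1 : ∑ j : Fin d, (if h : 0 < (j : ℕ) then
      b ⟨(j : ℕ) - 1, Nat.lt_of_le_of_lt (Nat.sub_le _ _) j.isLt⟩ else 0) ^ 2
      = ∑ k ∈ Finset.range d, (if 0 < k then b' (k - 1) else 0) ^ 2 := by
    rw [← Fin.sum_univ_eq_sum_range (fun k => (if 0 < k then b' (k - 1) else 0) ^ 2) d]
    refine Finset.sum_congr rfl fun j _ => ?_
    by_cases h : 0 < (j : ℕ)
    · rw [dif_pos h, if_pos h, hb']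
      have hlt : (j : ℕ) - 1 < d := Nat.lt_of_le_of_lt (Nat.sub_le _ _) j.isLt
      simp [dif_pos hlt]
    · rw [dif_neg h, if_neg h]
  have e2 : ∑ j : Fin d, (b j) ^ 2 = ∑ k ∈ Finset.range d, (b' k) ^ 2 := by
    rw [← Fin.sum_univ_eq_sum_range (fun k => (b' k) ^ 2) d]
    refine Finset.sum_congr rfl fun j _ => ?_
    simp [hb', j.isLt]
  rw [e1, e2]
  exact sum_pred_le d b'

lemma fin_sum_succ_le {d : ℕ} (b : Fin d → ℝ) :
    ∑ j : Fin d, (if h : (j : ℕ) + 1 < d then b ⟨(j : ℕ) + 1, h⟩ else 0) ^ 2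
      ≤ ∑ j : Fin d, (b j) ^ 2 := by
  set b' : ℕ → ℝ := fun k => if h : k < d then b ⟨k, h⟩ else 0 with hb'
  have e1 : ∑ j : Fin d, (if h : (j : ℕ) + 1 < d then b ⟨(j : ℕ) + 1, h⟩ else 0) ^ 2
      = ∑ k ∈ Finset.range d, (if k + 1 < d then b' (k + 1) else 0) ^ 2 := by
    rw [← Fin.sum_univ_eq_sum_range (fun k => (if k + 1 < d then b' (k + 1) else 0) ^ 2) d]
    refine Finset.sum_congr rfl fun j _ => ?_
    by_cases h : (j : ℕ) + 1 < d
    · rw [dif_pos h, if_pos h, hb']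
      simp [dif_pos h]
    · rw [dif_neg h, if_neg h]
  have e2 : ∑ j : Fin d, (b j) ^ 2 = ∑ k ∈ Finset.range d, (b' k) ^ 2 := by
    rw [← Fin.sum_univ_eq_sum_range (fun k => (b' k) ^ 2) d]
    refine Finset.sum_congr rfl fun j _ => ?_
    simp [hb', j.isLt]
  rw [e1, e2]
  exact sum_succ_le d b'
lemma row_eq {d : ℕ} (B : Fin d → Fin d → ℝ)
  (hsub : ∀ i j : Fin d, (i : ℕ) = (j : ℕ) + 1 → B i j = -1)
  (hzero : ∀ i j : Fin d, i ≠ j → (i : ℕ) ≠ (j : ℕ) + 1 → B i j = 0)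
  (j : Fin d) (b : Fin d → ℝ) :
    (∑ l, B j l * b l) = B j j * b j -
      (if h : 0 < (j : ℕ) then
        b ⟨(j : ℕ) - 1, Nat.lt_of_le_of_lt (Nat.sub_le _ _) j.isLt⟩ else 0) := by
  by_cases h0 : 0 < (j : ℕ)
  · set j' : Fin d := ⟨(j : ℕ) - 1, Nat.lt_of_le_of_lt (Nat.sub_le _ _) j.isLt⟩ with hj'
    have hne : j ≠ j' := by
      intro h; apply absurd (congrArg (Fin.val) h); simp [hj']; omega
    have hz : ∀ l ∈ Finset.univ, l ∉ ({j, j'} : Finset (Fin d)) → B j l * b l = 0 := by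
      intro l _ hl
      simp only [Finset.mem_insert, Finset.mem_singleton, not_or] at hl
      rw [hzero j l (Ne.symm hl.1) ?_, zero_mul]
      intro hc
      apply hl.2
      apply Fin.ext
      simp [hj']; omega
    rw [← Finset.sum_subset (Finset.subset_univ ({j, j'} : Finset (Fin d))) hz]
    rw [Finset.sum_pair hne]
    rw [hsub j j' (by simp [hj']; omega)]
    rw [dif_pos h0]
    ring
  · rw [dif_neg h0]
    rw [Finset.sum_eq_single j]
    · ring
    · intro l _ hl
      rw [hzero j l (Ne.symm hl) (by omega), zero_mul]
    · intro h; exact absurd (Finset.mem_univ j) h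

lemma col_eq {d : ℕ} (B : Fin d → Fin d → ℝ)
  (hsub : ∀ i j : Fin d, (i : ℕ) = (j : ℕ) + 1 → B i j = -1)
  (hzero : ∀ i j : Fin d, i ≠ j → (i : ℕ) ≠ (j : ℕ) + 1 → B i j = 0)
  (j : Fin d) (a : Fin d → ℝ) :
    (∑ l, B l j * a l) = B j j * a j -
      (if h : (j : ℕ) + 1 < d then a ⟨(j : ℕ) + 1, h⟩ else 0) := by
  by_cases h0 : (j : ℕ) + 1 < d
  · set j' : Fin d := ⟨(j : ℕ) + 1, h0⟩ with hj'
    have hne : j ≠ j' := by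
      intro h; apply absurd (congrArg (Fin.val) h); simp [hj']
    have hz : ∀ l ∈ Finset.univ, l ∉ ({j, j'} : Finset (Fin d)) → B l j * a l = 0 := by
      intro l _ hl
      simp only [Finset.mem_insert, Finset.mem_singleton, not_or] at hl
      rw [hzero l j hl.1 ?_, zero_mul]
      intro hc
      apply hl.2
      apply Fin.ext
      simp [hj', hc]
    rw [← Finset.sum_subset (Finset.subset_univ ({j, j'} : Finset (Fin d))) hz]
    rw [Finset.sum_pair hne]
    rw [hsub j' j (by simp [hj'])]
    rw [dif_pos h0]
    ring
  · rw [dif_neg h0]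
    rw [Finset.sum_eq_single j]
    · ring
    · intro l _ hl
      rw [hzero l j hl ?_, zero_mul]
      intro hc
      have := l.isLt
      omega
    · intro h; exact absurd (Finset.mem_univ j) h

lemma block_bound {d : ℕ} (B : Fin d → Fin d → ℝ)
  (hdiag : ∀ j, (B j j) ^ 2 ≤ 1)
  (hsub : ∀ i j : Fin d, (i : ℕ) = (j : ℕ) + 1 → B i j = -1)
  (hzero : ∀ i j : Fin d, i ≠ j → (i : ℕ) ≠ (j : ℕ) + 1 → B i j = 0)
  (α : ℝ) (a b : Fin d → ℝ) :
    (∑ j, (α * a j + ∑ l, B j l * b l) ^ 2)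
      + (∑ j, ((∑ l, B l j * a l) - α * b j) ^ 2)
      ≤ (8 + 2 * α ^ 2) * ((∑ j, (a j) ^ 2) + (∑ j, (b j) ^ 2)) := by
  set Pb : Fin d → ℝ := fun j => (if h : 0 < (j : ℕ) then
      b ⟨(j : ℕ) - 1, Nat.lt_of_le_of_lt (Nat.sub_le _ _) j.isLt⟩ else 0) with hPb
  set Sa : Fin d → ℝ := fun j => (if h : (j : ℕ) + 1 < d then a ⟨(j : ℕ) + 1, h⟩ else 0) with hSa
  have h1 : ∀ j, (α * a j + ∑ l, B j l * b l) ^ 2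
      ≤ 2 * α ^ 2 * (a j) ^ 2 + 4 * (b j) ^ 2 + 4 * (Pb j) ^ 2 := by
    intro j
    rw [row_eq B hsub hzero j b]
    have hd := hdiag j
    nlinarith [sq_nonneg (α * a j - (B j j * b j - Pb j)), sq_nonneg (B j j * b j + Pb j),
      sq_nonneg (b j), mul_nonneg (sub_nonneg.mpr hd) (sq_nonneg (b j))]
  have h2 : ∀ j, ((∑ l, B l j * a l) - α * b j) ^ 2
      ≤ 2 * α ^ 2 * (b j) ^ 2 + 4 * (a j) ^ 2 + 4 * (Sa j) ^ 2 := by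
    intro j
    rw [col_eq B hsub hzero j a]
    have hd := hdiag j
    nlinarith [sq_nonneg ((B j j * a j - Sa j) + α * b j), sq_nonneg (B j j * a j + Sa j),
      sq_nonneg (a j), mul_nonneg (sub_nonneg.mpr hd) (sq_nonneg (a j))]
  have hP : ∑ j, (Pb j) ^ 2 ≤ ∑ j, (b j) ^ 2 := fin_sum_pred_le b
  have hS : ∑ j, (Sa j) ^ 2 ≤ ∑ j, (a j) ^ 2 := fin_sum_succ_le a
  have t1 := Finset.sum_le_sum (fun j (_ : j ∈ Finset.univ) => h1 j)
  have t2 := Finset.sum_le_sum (fun j (_ : j ∈ Finset.univ) => h2 j)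
  simp only [Finset.sum_add_distrib, ← Finset.mul_sum] at t1 t2
  nlinarith [t1, t2, hP, hS, Finset.sum_nonneg (fun j (_ : j ∈ Finset.univ) => sq_nonneg (a j)),
    Finset.sum_nonneg (fun j (_ : j ∈ Finset.univ) => sq_nonneg (b j))]


lemma norm_combo {F : Type*} [NormedAddCommGroup F] [InnerProductSpace ℝ F]
    (x z : F) (a b : ℝ) (hab : a + b = 1) :
    ‖a • x + b • z‖ ^ 2 = a * ‖x‖ ^ 2 + b * ‖z‖ ^ 2 - a * b * ‖x - z‖ ^ 2 := by
  simp only [← real_inner_self_eq_norm_sq]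
  simp only [inner_add_left, inner_add_right, inner_sub_left, inner_sub_right,
    real_inner_smul_left, real_inner_smul_right, real_inner_comm z x]
  linear_combination (inner ℝ x x * a + inner ℝ z z * b : ℝ) * hab

lemma strongConvexOn_quad {ι : Type*} [Fintype ι] (m : ℝ) (W : ι → ℝ) (C : ℝ) :
    StrongConvexOn Set.univ m
      (fun x : EuclideanSpace ℝ ι => m / 2 * ‖x‖ ^ 2 + ((∑ p, x p * W p) + C)) := by
  refine ⟨convex_univ, fun x _ z _ a b ha hb hab => ?_⟩
  simp only [smul_eq_mul]
  have hL : (∑ p, (a • x + b • z) p * W p)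
      = a * (∑ p, x p * W p) + b * (∑ p, z p * W p) := by
    rw [Finset.mul_sum, Finset.mul_sum, ← Finset.sum_add_distrib]
    refine Finset.sum_congr rfl fun p _ => ?_
    simp only [PiLp.add_apply, PiLp.smul_apply, smul_eq_mul]
    ring
  rw [norm_combo x z a b hab, hL]
  refine le_of_eq ?_
  linear_combination (-C) * hab

lemma strongConcaveOn_quad {ι : Type*} [Fintype ι] (m : ℝ) (W : ι → ℝ) (C : ℝ) :
    StrongConcaveOn Set.univ m
      (fun x : EuclideanSpace ℝ ι => -(m / 2 * ‖x‖ ^ 2) + ((∑ p, x p * W p) + C)) := by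
  refine ⟨convex_univ, fun x _ z _ a b ha hb hab => ?_⟩
  simp only [smul_eq_mul]
  have hL : (∑ p, (a • x + b • z) p * W p)
      = a * (∑ p, x p * W p) + b * (∑ p, z p * W p) := by
    rw [Finset.mul_sum, Finset.mul_sum, ← Finset.sum_add_distrib]
    refine Finset.sum_congr rfl fun p _ => ?_
    simp only [PiLp.add_apply, PiLp.smul_apply, smul_eq_mul]
    ring
  rw [norm_combo x z a b hab, hL]
  refine le_of_eq ?_
  linear_combination C * hab

theorem hard_instance_finite_sum_properties
    {d n : ℕ} (hd : 1 ≤ d) (hn : 1 ≤ n) (α : ℝ) (hα : 0 < α) (lam : ℝ) (hlam : 0 < lam)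
    (ω : ℝ) (hω : ω = (Real.sqrt (α ^ 2 + 4) - α) / 2)
    (B : Fin d → Fin d → ℝ)
    (hB : B = fun (i j : Fin d) =>
      if i = j then (if (i : ℕ) = d - 1 then Real.sqrt (α * ω) else 1)
      else if (i : ℕ) = (j : ℕ) + 1 then -1 else 0)
    (c : Fin d → ℝ) (hc : c = fun (i : Fin d) => if (i : ℕ) = 0 then ω else 0)
    (H : EuclideanSpace ℝ (Fin d) → EuclideanSpace ℝ (Fin d) → ℝ)
    (hH : H = fun u v =>
      α / 2 * ‖u‖ ^ 2 + (∑ i, u i * ((∑ j, B i j * v j) - c i)) - α / 2 * ‖v‖ ^ 2)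
    (U : Fin n → EuclideanSpace ℝ (Fin n × Fin d) → EuclideanSpace ℝ (Fin d))
    (hU : U = fun i x => WithLp.toLp 2 (fun (j : Fin d) => x (i, j)))
    (f : Fin n → EuclideanSpace ℝ (Fin n × Fin d) → EuclideanSpace ℝ (Fin n × Fin d) → ℝ)
    (hf : f = fun i x y => lam * H (U i x) (U i y)) :
    (∀ x x' y y' : EuclideanSpace ℝ (Fin n × Fin d),
      (n : ℝ)⁻¹ * ∑ i,
          (‖gradient (fun u => f i u y) x - gradient (fun u => f i u y') x'‖ ^ 2 +
            ‖gradient (fun v => f i x v) y - gradient (fun v => f i x' v) y'‖ ^ 2)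
        ≤ (lam * Real.sqrt ((8 + 2 * α ^ 2) / n)) ^ 2 * (‖x - x'‖ ^ 2 + ‖y - y'‖ ^ 2)) ∧
    (∀ y : EuclideanSpace ℝ (Fin n × Fin d),
      StrongConvexOn Set.univ (lam * α / n) (fun x => (n : ℝ)⁻¹ * ∑ i, f i x y)) ∧
    (∀ x : EuclideanSpace ℝ (Fin n × Fin d),
      StrongConcaveOn Set.univ (lam * α / n) (fun y => (n : ℝ)⁻¹ * ∑ i, f i x y)) := by
  -- basic facts about ω and B
  have hd4 : (0:ℝ) ≤ α ^ 2 + 4 := by positivity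
  have hs : Real.sqrt (α ^ 2 + 4) ^ 2 = α ^ 2 + 4 := Real.sq_sqrt hd4
  have hsnn : 0 ≤ Real.sqrt (α ^ 2 + 4) := Real.sqrt_nonneg _
  have hαs : α < Real.sqrt (α ^ 2 + 4) := (Real.lt_sqrt hα.le).mpr (by linarith)
  have hω0 : 0 ≤ ω := by rw [hω]; linarith
  have hαω : 0 ≤ α * ω := mul_nonneg hα.le hω0
  have hαω1 : α * ω ≤ 1 := by
    rw [hω]
    nlinarith [sq_nonneg (α * Real.sqrt (α ^ 2 + 4) - (α ^ 2 + 2)), hs, hsnn,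
      mul_nonneg hα.le hsnn]
  have hdiag : ∀ j : Fin d, (B j j) ^ 2 ≤ 1 := by
    intro j
    simp only [hB, if_pos rfl]
    by_cases hj : (j:ℕ) = d - 1
    · rw [if_pos hj, Real.sq_sqrt hαω]; exact hαω1
    · rw [if_neg hj]; norm_num
  have hsub : ∀ i j : Fin d, (i : ℕ) = (j : ℕ) + 1 → B i j = -1 := by
    intro i j h
    have hne : i ≠ j := by intro e; rw [e] at h; omega
    simp only [hB, if_neg hne, if_pos h]
  have hzero : ∀ i j : Fin d, i ≠ j → (i : ℕ) ≠ (j : ℕ) + 1 → B i j = 0 := by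
    intro i j h1 h2
    simp only [hB, if_neg h1, if_neg h2]
  refine ⟨?_, ?_, ?_⟩
  · -- average smoothness
    intro x x' y y'
    have keyx : ∀ (i : Fin n) (yy xx : EuclideanSpace ℝ (Fin n × Fin d)),
        gradient (fun u => f i u yy) xx
          = (WithLp.toLp 2 (fun p => if p.1 = i then
              lam * (α * xx (i, p.2) + ((∑ l, B p.2 l * yy (i, l)) - c p.2)) else 0) :
              EuclideanSpace ℝ (Fin n × Fin d)) := by
      intro i yy xx
      have hfun : (fun u : EuclideanSpace ℝ (Fin n × Fin d) => f i u yy)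
          = fun u => (∑ p : Fin n × Fin d,
              ((if p.1 = i then lam * α / 2 else 0) * (u p * u p)
                + u p * (if p.1 = i then lam * ((∑ l, B p.2 l * yy (i, l)) - c p.2) else 0)))
            + lam * (-(α / 2) * ∑ j, (yy (i, j)) ^ 2) := by
        funext u
        simp only [hf, hH, hU]
        simp only [esp_norm_sq]
        rw [Fintype.sum_prod_type]
        rw [Finset.sum_eq_single i (fun k _ hk => by simp [if_neg hk])
          (fun h => absurd (Finset.mem_univ i) h)]
        simp only [eq_self_iff_true, if_true]
        rw [Finset.sum_add_distrib]
        have e2 : ∑ j : Fin d, lam * α / 2 * (u (i, j) * u (i, j))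
            = lam * α / 2 * ∑ j : Fin d, (u (i, j)) ^ 2 := by
          rw [Finset.mul_sum]; exact Finset.sum_congr rfl fun j _ => by ring
        have e3 : ∑ j : Fin d, u (i, j) * (lam * ((∑ l, B j l * yy (i, l)) - c j))
            = lam * ∑ j : Fin d, u (i, j) * ((∑ l, B j l * yy (i, l)) - c j) := by
          rw [Finset.mul_sum]; exact Finset.sum_congr rfl fun j _ => by ring
        rw [e2, e3]
        ring
      rw [hfun]
      rw [(hasGradientAt_quad
        (fun p : Fin n × Fin d => if p.1 = i then lam * α / 2 else 0)
        (fun p : Fin n × Fin d => if p.1 = i then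
          lam * ((∑ l, B p.2 l * yy (i, l)) - c p.2) else 0)
        (lam * (-(α / 2) * ∑ j, (yy (i, j)) ^ 2)) xx).gradient]
      congr 1
      funext p
      obtain ⟨k, j⟩ := p
      by_cases hk : k = i
      · subst hk
        simp only [eq_self_iff_true, if_true]
        ring
      · simp [hk]
    have keyy : ∀ (i : Fin n) (xx yy : EuclideanSpace ℝ (Fin n × Fin d)),
        gradient (fun v => f i xx v) yy
          = (WithLp.toLp 2 (fun p => if p.1 = i then
              lam * ((∑ l, B l p.2 * xx (i, l)) - α * yy (i, p.2)) else 0) :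
              EuclideanSpace ℝ (Fin n × Fin d)) := by
      intro i xx yy
      have hfun : (fun v : EuclideanSpace ℝ (Fin n × Fin d) => f i xx v)
          = fun v => (∑ p : Fin n × Fin d,
              ((if p.1 = i then -(lam * α / 2) else 0) * (v p * v p)
                + v p * (if p.1 = i then lam * (∑ l, B l p.2 * xx (i, l)) else 0)))
            + lam * (α / 2 * (∑ j, (xx (i, j)) ^ 2) - ∑ j, xx (i, j) * c j) := by
        funext v
        simp only [hf, hH, hU]
        simp only [esp_norm_sq]
        rw [Fintype.sum_prod_type]
        rw [Finset.sum_eq_single i (fun k _ hk => by simp [if_neg hk])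
          (fun h => absurd (Finset.mem_univ i) h)]
        simp only [eq_self_iff_true, if_true]
        have esplit : ∑ j : Fin d, xx (i, j) * ((∑ l, B j l * v (i, l)) - c j)
            = (∑ j : Fin d, xx (i, j) * (∑ l, B j l * v (i, l)))
              - ∑ j : Fin d, xx (i, j) * c j := by
          rw [← Finset.sum_sub_distrib]
          exact Finset.sum_congr rfl fun j _ => by ring
        have swap : (∑ j : Fin d, xx (i, j) * (∑ l, B j l * v (i, l)))
            = ∑ j : Fin d, v (i, j) * (∑ l, B l j * xx (i, l)) := by
          simp_rw [Finset.mul_sum]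
          rw [Finset.sum_comm]
          exact Finset.sum_congr rfl fun j _ => Finset.sum_congr rfl fun l _ => by ring
        rw [esplit, swap]
        rw [Finset.sum_add_distrib]
        have e2 : ∑ j : Fin d, -(lam * α / 2) * (v (i, j) * v (i, j))
            = -(lam * α / 2) * ∑ j : Fin d, (v (i, j)) ^ 2 := by
          rw [Finset.mul_sum]; exact Finset.sum_congr rfl fun j _ => by ring
        have e3 : ∑ j : Fin d, v (i, j) * (lam * (∑ l, B l j * xx (i, l)))
            = lam * ∑ j : Fin d, v (i, j) * (∑ l, B l j * xx (i, l)) := by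
          rw [Finset.mul_sum]; exact Finset.sum_congr rfl fun j _ => by ring
        rw [e2, e3]
        ring
      rw [hfun]
      rw [(hasGradientAt_quad
        (fun p : Fin n × Fin d => if p.1 = i then -(lam * α / 2) else 0)
        (fun p : Fin n × Fin d => if p.1 = i then
          lam * (∑ l, B l p.2 * xx (i, l)) else 0)
        (lam * (α / 2 * (∑ j, (xx (i, j)) ^ 2) - ∑ j, xx (i, j) * c j)) yy).gradient]
      congr 1
      funext p
      obtain ⟨k, j⟩ := p
      by_cases hk : k = i
      · subst hk
        simp only [eq_self_iff_true, if_true]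
        ring
      · simp [hk]
    -- rewrite all four gradients
    rw [show (∑ i, (‖gradient (fun u => f i u y) x - gradient (fun u => f i u y') x'‖ ^ 2 +
            ‖gradient (fun v => f i x v) y - gradient (fun v => f i x' v) y'‖ ^ 2))
        = ∑ i, ((∑ j, (lam * (α * (x (i, j) - x' (i, j))
              + ∑ l, B j l * (y (i, l) - y' (i, l)))) ^ 2)
          + (∑ j, (lam * ((∑ l, B l j * (x (i, l) - x' (i, l)))
              - α * (y (i, j) - y' (i, j)))) ^ 2)) from ?_]
    · -- main estimate
      have per_i : ∀ i : Fin n,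
          ((∑ j, (lam * (α * (x (i, j) - x' (i, j))
              + ∑ l, B j l * (y (i, l) - y' (i, l)))) ^ 2)
          + (∑ j, (lam * ((∑ l, B l j * (x (i, l) - x' (i, l)))
              - α * (y (i, j) - y' (i, j)))) ^ 2))
          ≤ lam ^ 2 * (8 + 2 * α ^ 2) * ((∑ j, (x (i, j) - x' (i, j)) ^ 2)
              + (∑ j, (y (i, j) - y' (i, j)) ^ 2)) := by
        intro i
        have hb := block_bound B hdiag hsub hzero α
          (fun j => x (i, j) - x' (i, j)) (fun j => y (i, j) - y' (i, j))
        have f1 : ∑ j, (lam * (α * (x (i, j) - x' (i, j))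
              + ∑ l, B j l * (y (i, l) - y' (i, l)))) ^ 2
            = lam ^ 2 * ∑ j, (α * (x (i, j) - x' (i, j))
              + ∑ l, B j l * (y (i, l) - y' (i, l))) ^ 2 := by
          rw [Finset.mul_sum]; exact Finset.sum_congr rfl fun j _ => by ring
        have f2 : ∑ j, (lam * ((∑ l, B l j * (x (i, l) - x' (i, l)))
              - α * (y (i, j) - y' (i, j)))) ^ 2
            = lam ^ 2 * ∑ j, ((∑ l, B l j * (x (i, l) - x' (i, l)))
              - α * (y (i, j) - y' (i, j))) ^ 2 := by
          rw [Finset.mul_sum]; exact Finset.sum_congr rfl fun j _ => by ring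
        rw [f1, f2]
        calc lam ^ 2 * ∑ j, (α * (x (i, j) - x' (i, j))
              + ∑ l, B j l * (y (i, l) - y' (i, l))) ^ 2
            + lam ^ 2 * ∑ j, ((∑ l, B l j * (x (i, l) - x' (i, l)))
              - α * (y (i, j) - y' (i, j))) ^ 2
            = lam ^ 2 * ((∑ j, (α * (x (i, j) - x' (i, j))
              + ∑ l, B j l * (y (i, l) - y' (i, l))) ^ 2)
              + ∑ j, ((∑ l, B l j * (x (i, l) - x' (i, l)))
              - α * (y (i, j) - y' (i, j))) ^ 2) := by ring
          _ ≤ lam ^ 2 * ((8 + 2 * α ^ 2) * ((∑ j, (x (i, j) - x' (i, j)) ^ 2)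
              + (∑ j, (y (i, j) - y' (i, j)) ^ 2))) :=
              mul_le_mul_of_nonneg_left hb (sq_nonneg lam)
          _ = lam ^ 2 * (8 + 2 * α ^ 2) * ((∑ j, (x (i, j) - x' (i, j)) ^ 2)
              + (∑ j, (y (i, j) - y' (i, j)) ^ 2)) := by ring
      have hsum := Finset.sum_le_sum (fun i (_ : i ∈ Finset.univ) => per_i i)
      have hnorms : ∑ i : Fin n, (lam ^ 2 * (8 + 2 * α ^ 2) * ((∑ j, (x (i, j) - x' (i, j)) ^ 2)
              + (∑ j, (y (i, j) - y' (i, j)) ^ 2)))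
          = lam ^ 2 * (8 + 2 * α ^ 2) * (‖x - x'‖ ^ 2 + ‖y - y'‖ ^ 2) := by
        rw [← Finset.mul_sum]
        congr 1
        rw [esp_norm_sq (x - x'), esp_norm_sq (y - y'),
          Fintype.sum_prod_type, Fintype.sum_prod_type, ← Finset.sum_add_distrib]
        refine Finset.sum_congr rfl fun i _ => ?_
        simp [PiLp.sub_apply]
      rw [hnorms] at hsum
      have hrhs : (lam * Real.sqrt ((8 + 2 * α ^ 2) / n)) ^ 2
          = lam ^ 2 * ((8 + 2 * α ^ 2) / n) := by
        rw [mul_pow, Real.sq_sqrt (by positivity)]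
      rw [hrhs]
      have hnn : (0:ℝ) ≤ (n:ℝ)⁻¹ := by positivity
      calc (n : ℝ)⁻¹ * ∑ i : Fin n, ((∑ j, (lam * (α * (x (i, j) - x' (i, j))
              + ∑ l, B j l * (y (i, l) - y' (i, l)))) ^ 2)
          + (∑ j, (lam * ((∑ l, B l j * (x (i, l) - x' (i, l)))
              - α * (y (i, j) - y' (i, j)))) ^ 2))
          ≤ (n : ℝ)⁻¹ * (lam ^ 2 * (8 + 2 * α ^ 2) * (‖x - x'‖ ^ 2 + ‖y - y'‖ ^ 2)) :=
            mul_le_mul_of_nonneg_left hsum hnn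
        _ = lam ^ 2 * ((8 + 2 * α ^ 2) / (n:ℝ)) * (‖x - x'‖ ^ 2 + ‖y - y'‖ ^ 2) := by
            ring
    · -- the rewriting of the sum of gradient norms
      refine Finset.sum_congr rfl fun i _ => ?_
      rw [keyx i y x, keyx i y' x', keyy i x y, keyy i x' y']
      congr 1
      · rw [esp_norm_sq, Fintype.sum_prod_type]
        rw [Finset.sum_eq_single i (fun k _ hk => by simp [PiLp.sub_apply, if_neg hk])
          (fun h => absurd (Finset.mem_univ i) h)]
        refine Finset.sum_congr rfl fun j _ => ?_
        simp only [PiLp.sub_apply, eq_self_iff_true, if_true]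
        have : (∑ l, B j l * (y (i, l) - y' (i, l)))
            = (∑ l, B j l * y (i, l)) - ∑ l, B j l * y' (i, l) := by
          rw [← Finset.sum_sub_distrib]
          exact Finset.sum_congr rfl fun l _ => by ring
        rw [this]
        ring
      · rw [esp_norm_sq, Fintype.sum_prod_type]
        rw [Finset.sum_eq_single i (fun k _ hk => by simp [PiLp.sub_apply, if_neg hk])
          (fun h => absurd (Finset.mem_univ i) h)]
        refine Finset.sum_congr rfl fun j _ => ?_
        simp only [PiLp.sub_apply, eq_self_iff_true, if_true]
        have : (∑ l, B l j * (x (i, l) - x' (i, l)))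
            = (∑ l, B l j * x (i, l)) - ∑ l, B l j * x' (i, l) := by
          rw [← Finset.sum_sub_distrib]
          exact Finset.sum_congr rfl fun l _ => by ring
        rw [this]
        ring
  · -- strong convexity in x
    intro y
    have hq : (fun x : EuclideanSpace ℝ (Fin n × Fin d) => (n:ℝ)⁻¹ * ∑ i, f i x y)
        = fun x => (lam * α / n) / 2 * ‖x‖ ^ 2
          + ((∑ p : Fin n × Fin d, x p * ((n:ℝ)⁻¹ * (lam * ((∑ l, B p.2 l * y (p.1, l)) - c p.2))))
            + (n:ℝ)⁻¹ * ∑ i, lam * (-(α / 2) * ∑ j, (y (i, j)) ^ 2)) := by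
      funext x
      simp only [hf, hH, hU]
      simp only [esp_norm_sq]
      simp only [Fintype.sum_prod_type]
      trans (∑ i : Fin n, ((lam * α / ↑n) / 2 * ∑ j : Fin d, (x (i, j)) ^ 2
        + ((∑ j : Fin d, x (i, j) * ((n:ℝ)⁻¹ * (lam * ((∑ l, B j l * y (i, l)) - c j))))
          + (n:ℝ)⁻¹ * (lam * (-(α / 2) * ∑ j : Fin d, (y (i, j)) ^ 2)))))
      · rw [Finset.mul_sum]
        refine Finset.sum_congr rfl fun i _ => ?_
        have e2 : ∑ j, x (i, j) * ((n:ℝ)⁻¹ * (lam * ((∑ l, B j l * y (i, l)) - c j)))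
            = (n:ℝ)⁻¹ * (lam * ∑ j, x (i, j) * ((∑ l, B j l * y (i, l)) - c j)) := by
          rw [Finset.mul_sum, Finset.mul_sum]
          exact Finset.sum_congr rfl fun j _ => by ring
        rw [e2]
        ring
      · rw [Finset.sum_add_distrib, Finset.sum_add_distrib, ← Finset.mul_sum, ← Finset.mul_sum]
    rw [hq]
    exact strongConvexOn_quad (lam * α / n) _ _
  · -- strong concavity in y
    intro x
    have hq : (fun y : EuclideanSpace ℝ (Fin n × Fin d) => (n:ℝ)⁻¹ * ∑ i, f i x y)
        = fun y => -((lam * α / n) / 2 * ‖y‖ ^ 2)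
          + ((∑ p : Fin n × Fin d, y p * ((n:ℝ)⁻¹ * (lam * ∑ l, B l p.2 * x (p.1, l))))
            + (n:ℝ)⁻¹ * ∑ i, lam * (α / 2 * (∑ j, (x (i, j)) ^ 2) - ∑ j, x (i, j) * c j)) := by
      funext y
      simp only [hf, hH, hU]
      simp only [esp_norm_sq]
      simp only [Fintype.sum_prod_type]
      trans (∑ i : Fin n, (-((lam * α / ↑n) / 2 * ∑ j : Fin d, (y (i, j)) ^ 2)
        + ((∑ j : Fin d, y (i, j) * ((n:ℝ)⁻¹ * (lam * ∑ l, B l j * x (i, l))))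
          + (n:ℝ)⁻¹ * (lam * (α / 2 * (∑ j : Fin d, (x (i, j)) ^ 2) - ∑ j : Fin d, x (i, j) * c j)))))
      swap
      · rw [Finset.sum_add_distrib, Finset.sum_add_distrib, Finset.sum_neg_distrib,
          ← Finset.mul_sum, ← Finset.mul_sum]
      rw [Finset.mul_sum]
      refine Finset.sum_congr rfl fun i _ => ?_
      have esplit : ∑ j : Fin d, x (i, j) * ((∑ l, B j l * y (i, l)) - c j)
          = (∑ j : Fin d, x (i, j) * (∑ l, B j l * y (i, l)))
            - ∑ j : Fin d, x (i, j) * c j := by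
        rw [← Finset.sum_sub_distrib]
        exact Finset.sum_congr rfl fun j _ => by ring
      have swap : (∑ j : Fin d, x (i, j) * (∑ l, B j l * y (i, l)))
          = ∑ j : Fin d, y (i, j) * (∑ l, B l j * x (i, l)) := by
        simp_rw [Finset.mul_sum]
        rw [Finset.sum_comm]
        exact Finset.sum_congr rfl fun j _ => Finset.sum_congr rfl fun l _ => by ring
      rw [esplit, swap]
      have e2 : ∑ j, y (i, j) * ((n:ℝ)⁻¹ * (lam * ∑ l, B l j * x (i, l)))
          = (n:ℝ)⁻¹ * (lam * ∑ j, y (i, j) * (∑ l, B l j * x (i, l))) := by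
        rw [Finset.mul_sum, Finset.mul_sum]
        exact Finset.sum_congr rfl fun j _ => by ring
      rw [e2]
      ring
    rw [hq]
    exact strongConcaveOn_quad (lam * α / n) _ _
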